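/- Let P be a Hamiltonian path in an r × c cylinder graph (r, c ≥ 2) starting at (0,0) and ending at (x, c−1), which uses exactly 2m + 1 horizontal edges between the first pair of columns and exactly one horizontal edge between each subsequent pair of consecutive columns. Then x ∈ A_{r,c,m} = {(c + 2m − 2i) mod r : 0 ≤ i ≤ c + 2m}. -/

import Mathlib

/-- The `r × c` cylinder graph: vertices `(i, j)` with row `i : ZMod r` and column
`j : Fin c`; vertical edges `(i,j)–(i+1 mod r, j)` and horizontal edges `(i,j)–(i,j+1)`. -/
def cylGraph (r c : ℕ) : SimpleGraph (ZMod r × Fin c) :=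
  SimpleGraph.fromRel (fun u v =>
    (u.2 = v.2 ∧ v.1 = u.1 + 1) ∨ (u.1 = v.1 ∧ (v.2 : ℕ) = (u.2 : ℕ) + 1))

/-- The number of horizontal darts of a walk between columns `j` and `j+1`. -/
def hCount {r c : ℕ} {u v : ZMod r × Fin c} (w : (cylGraph r c).Walk u v) (j : ℕ) : ℕ :=
  w.darts.countP fun d => decide (d.toProd.1.1 = d.toProd.2.1 ∧
    (((d.toProd.1.2 : ℕ) = j ∧ (d.toProd.2.2 : ℕ) = j + 1) ∨
     ((d.toProd.1.2 : ℕ) = j + 1 ∧ (d.toProd.2.2 : ℕ) = j)))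

namespace Stmt17Aux

/-! ### Generic list lemmas -/

lemma countP_eq_sum_range {α : Type*} (L : List α) (P : α → Bool) (key : α → ℕ) (n : ℕ)
    (h : ∀ a ∈ L, P a = true → key a < n) :
    L.countP P = ∑ s ∈ Finset.range n, L.countP (fun a => P a && (key a == s)) := by
  induction L with
  | nil => simp
  | cons a L ih =>
    simp only [List.countP_cons]
    rw [ih (fun b hb => h b (List.mem_cons_of_mem a hb)), Finset.sum_add_distrib]
    congr 1
    by_cases hP : P a = true
    · simp only [hP, Bool.true_and, if_pos rfl]
      have hk : key a ∈ Finset.range n := Finset.mem_range.mpr (h a List.mem_cons_self hP)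
      rw [Finset.sum_congr rfl (fun s _ => by
        show (if (key a == s) = true then 1 else 0) = if key a = s then 1 else 0
        simp [beq_iff_eq])]
      rw [Finset.sum_ite_eq (Finset.range n) (key a) (fun _ => 1), if_pos hk]; simp
    · simp [hP, Bool.false_and]

lemma countP_or_disjoint {α : Type*} (L : List α) (P Q : α → Bool)
    (h : ∀ a, ¬(P a = true ∧ Q a = true)) :
    L.countP (fun a => P a || Q a) = L.countP P + L.countP Q := by
  induction L with
  | nil => simp
  | cons a L ih =>
    simp only [List.countP_cons, ih]
    have := h a
    cases hP : P a <;> cases hQ : Q a <;> simp [hP, hQ] at this ⊢ <;> omega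

lemma walk_flip_parity {V : Type*} {G : SimpleGraph V} (g : V → Bool) {u v : V} (w : G.Walk u v) :
    (w.darts.countP (fun d => g d.toProd.1 != g d.toProd.2)) % 2 = (if g u = g v then 0 else 1) := by
  induction w with
  | nil => simp
  | @cons a b c hadj p ih =>
    rw [SimpleGraph.Walk.darts_cons, List.countP_cons]
    cases hab : g a <;> cases hbc : g b <;> cases hac : g c <;>
      simp [hab, hbc, hac] at ih ⊢ <;> omega

lemma side_flip_nat {p q r α : ℕ} (hpq : p < q) (hqr : q < r) (hα : α < r) :
    (¬((p < α ∧ α ≤ q) ↔ (p < (α+1)%r ∧ (α+1)%r ≤ q))) ↔ (α = p ∨ α = q) := by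
  rcases Nat.lt_or_ge (α+1) r with h|h
  · rw [Nat.mod_eq_of_lt h]; omega
  · have h1 : α + 1 = r := by omega
    rw [h1, Nat.mod_self]; omega

/-! ### Dart classification -/

variable {r c : ℕ}

def isVert (d : (cylGraph r c).Dart) : Bool := decide (d.toProd.1.2 = d.toProd.2.2)

def isHoriz (d : (cylGraph r c).Dart) : Bool := decide (d.toProd.1.1 = d.toProd.2.1)

def vslot (d : (cylGraph r c).Dart) : ℕ :=
  if d.toProd.2.1 = d.toProd.1.1 + 1 then (d.toProd.1.1).val else (d.toProd.2.1).val

def hkey (d : (cylGraph r c).Dart) : ℕ := min (d.toProd.1.2 : ℕ) (d.toProd.2.2 : ℕ)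

def sideB (p q : ℕ) (v : ZMod r × Fin c) : Bool := decide (p < v.1.val ∧ v.1.val ≤ q)

lemma dart_cases (d : (cylGraph r c).Dart) :
    (d.toProd.1.2 = d.toProd.2.2 ∧ d.toProd.1.1 ≠ d.toProd.2.1 ∧
      (d.toProd.2.1 = d.toProd.1.1 + 1 ∨ d.toProd.1.1 = d.toProd.2.1 + 1))
    ∨ (d.toProd.1.1 = d.toProd.2.1 ∧ d.toProd.1.2 ≠ d.toProd.2.2 ∧
      ((d.toProd.2.2 : ℕ) = (d.toProd.1.2 : ℕ) + 1 ∨ (d.toProd.1.2 : ℕ) = (d.toProd.2.2 : ℕ) + 1)) := by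
  have h := d.adj
  unfold cylGraph at h
  rw [SimpleGraph.fromRel_adj] at h
  obtain ⟨hne, h⟩ := h
  have hne2 : ¬(d.toProd.1.1 = d.toProd.2.1 ∧ d.toProd.1.2 = d.toProd.2.2) := by
    rintro ⟨h1, h2⟩; exact hne (Prod.ext h1 h2)
  rcases h with (⟨h1, h2⟩ | ⟨h1, h2⟩) | (⟨h1, h2⟩ | ⟨h1, h2⟩)
  · exact Or.inl ⟨h1, fun hc => hne2 ⟨hc, h1⟩, Or.inl h2⟩
  · exact Or.inr ⟨h1, fun hc => hne2 ⟨h1, hc⟩, Or.inl h2⟩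
  · exact Or.inl ⟨h1.symm, fun hc => hne2 ⟨hc, h1.symm⟩, Or.inr h2⟩
  · exact Or.inr ⟨h1.symm, fun hc => hne2 ⟨h1.symm, hc⟩, Or.inr h2⟩

lemma isHoriz_eq_not_isVert (d : (cylGraph r c).Dart) : isHoriz d = !(isVert d) := by
  rcases dart_cases d with ⟨h1, h2, _⟩ | ⟨h1, h2, _⟩ <;>
    simp [isHoriz, isVert, h1, h2]

lemma vslot_lt [NeZero r] (d : (cylGraph r c).Dart) : vslot d < r := by
  unfold vslot; split <;> exact ZMod.val_lt _

lemma hkey_lt (hc : 2 ≤ c) (d : (cylGraph r c).Dart) (hd : isHoriz d = true) :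
    hkey d < c - 1 := by
  rcases dart_cases d with ⟨h1, h2, _⟩ | ⟨_, _, h3⟩
  · simp [isHoriz, h2] at hd
  · have b1 : (d.toProd.1.2 : ℕ) < c := d.toProd.1.2.isLt
    have b2 : (d.toProd.2.2 : ℕ) < c := d.toProd.2.2.isLt
    unfold hkey; omega

lemma val_succ (hr : 2 ≤ r) (a : ZMod r) : (a + 1).val = (a.val + 1) % r := by
  have : NeZero r := ⟨by omega⟩
  have : Fact (1 < r) := ⟨by omega⟩
  rw [ZMod.val_add, ZMod.val_one]

lemma side_dart (hr : 2 ≤ r) {p q : ℕ} (hpq : p < q) (hqr : q < r) (d : (cylGraph r c).Dart) :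
    ((sideB p q d.toProd.1 != sideB p q d.toProd.2))
      = (isVert d && (vslot d == p || vslot d == q)) := by
  have : NeZero r := ⟨by omega⟩
  rcases dart_cases d with ⟨h1, h2, h3⟩ | ⟨h1, h2, h3⟩
  · have hv : isVert d = true := by simp [isVert, h1]
    rw [hv, Bool.true_and]
    by_cases hud : d.toProd.2.1 = d.toProd.1.1 + 1
    · have hs : vslot d = (d.toProd.1.1).val := by simp [vslot, hud]
      have hval : (d.toProd.2.1).val = ((d.toProd.1.1).val + 1) % r := by
        rw [hud]; exact val_succ hr _
      rw [Bool.eq_iff_iff]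
      simp only [bne_iff_ne, ne_eq, sideB, decide_eq_decide, hs, hval,
        Bool.or_eq_true, beq_iff_eq]
      exact side_flip_nat hpq hqr (ZMod.val_lt _)
    · have hdown : d.toProd.1.1 = d.toProd.2.1 + 1 := h3.resolve_left hud
      have hs : vslot d = (d.toProd.2.1).val := by simp [vslot, hud]
      have hval : (d.toProd.1.1).val = ((d.toProd.2.1).val + 1) % r := by
        rw [hdown]; exact val_succ hr _
      rw [Bool.eq_iff_iff]
      simp only [bne_iff_ne, ne_eq, sideB, decide_eq_decide, hs, hval,
        Bool.or_eq_true, beq_iff_eq]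
      have hkey := side_flip_nat (r := r) (α := (d.toProd.2.1).val) hpq hqr (ZMod.val_lt _)
      constructor
      · intro h; exact hkey.mp (fun hiff => h hiff.symm)
      · intro h hiff; exact (hkey.mpr h) hiff.symm
  · have hv : isVert d = false := by simp [isVert]; exact h2
    rw [hv, Bool.false_and]
    simp [sideB, h1]

lemma slot_col_eq (hr : 2 ≤ r) {u v : ZMod r × Fin c} {w : (cylGraph r c).Walk u v}
    (hp : w.IsPath) {d d' : (cylGraph r c).Dart}
    (hd : d ∈ w.darts) (hd' : d' ∈ w.darts)
    (hvd : isVert d = true) (hvd' : isVert d' = true)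
    (hs : vslot d = vslot d') (hcol : d.toProd.1.2 = d'.toProd.1.2) : d = d' := by
  have : NeZero r := ⟨by omega⟩
  have hinj : ∀ a ∈ w.darts, ∀ b ∈ w.darts, a.edge = b.edge → a = b := by
    have hednd : w.edges.Nodup := hp.edges_nodup
    exact List.inj_on_of_nodup_map (f := SimpleGraph.Dart.edge) hednd
  have hc1 : d.toProd.1.2 = d.toProd.2.2 := by simpa [isVert] using hvd
  have hc1' : d'.toProd.1.2 = d'.toProd.2.2 := by simpa [isVert] using hvd'
  have hv3 := (dart_cases d).resolve_right (fun h => h.2.1 hc1)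
  have hv3' := (dart_cases d').resolve_right (fun h => h.2.1 hc1')
  apply hinj d hd d' hd'
  rw [SimpleGraph.dart_edge_eq_iff]
  by_cases h1 : d.toProd.2.1 = d.toProd.1.1 + 1 <;>
    by_cases h2 : d'.toProd.2.1 = d'.toProd.1.1 + 1
  · left
    have e1 : d.toProd.1.1 = d'.toProd.1.1 :=
      ZMod.val_injective r (by simpa [vslot, h1, h2] using hs)
    apply SimpleGraph.Dart.ext
    apply Prod.ext <;> apply Prod.ext
    · exact e1
    · exact hcol
    · rw [h1, h2, e1]
    · rw [← hc1, ← hc1', hcol]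
  · right
    have hdown' : d'.toProd.1.1 = d'.toProd.2.1 + 1 := hv3'.2.2.resolve_left h2
    have e1 : d.toProd.1.1 = d'.toProd.2.1 :=
      ZMod.val_injective r (by simpa [vslot, h1, h2] using hs)
    apply SimpleGraph.Dart.ext
    show d.toProd = d'.toProd.swap
    apply Prod.ext <;> apply Prod.ext
    · exact e1
    · exact hcol.trans hc1'
    · rw [h1, e1, ← hdown']; rfl
    · exact hc1.symm.trans hcol
  · right
    have hdown : d.toProd.1.1 = d.toProd.2.1 + 1 := hv3.2.2.resolve_left h1
    have e1 : d.toProd.2.1 = d'.toProd.1.1 :=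
      ZMod.val_injective r (by simpa [vslot, h1, h2] using hs)
    apply SimpleGraph.Dart.ext
    show d.toProd = d'.toProd.swap
    apply Prod.ext <;> apply Prod.ext
    · rw [hdown, e1, ← h2]; rfl
    · exact hcol.trans hc1'
    · exact e1
    · exact hc1.symm.trans hcol
  · left
    have hdown : d.toProd.1.1 = d.toProd.2.1 + 1 := hv3.2.2.resolve_left h1
    have hdown' : d'.toProd.1.1 = d'.toProd.2.1 + 1 := hv3'.2.2.resolve_left h2
    have e1 : d.toProd.2.1 = d'.toProd.2.1 :=
      ZMod.val_injective r (by simpa [vslot, h1, h2] using hs)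
    apply SimpleGraph.Dart.ext
    apply Prod.ext <;> apply Prod.ext
    · rw [hdown, hdown', e1]
    · exact hcol
    · exact e1
    · rw [← hc1, ← hc1', hcol]

lemma slot_count_le (hr : 2 ≤ r) {u v : ZMod r × Fin c} {w : (cylGraph r c).Walk u v}
    (hp : w.IsPath) (s : ℕ) :
    w.darts.countP (fun d => isVert d && (vslot d == s)) ≤ c := by
  rw [List.countP_eq_length_filter]
  have hnd : w.darts.Nodup :=
    SimpleGraph.Walk.darts_nodup_of_support_nodup hp.support_nodup
  have hfil : (w.darts.filter (fun d => isVert d && (vslot d == s))).Nodup := hnd.filter _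
  have hmap : ((w.darts.filter (fun d => isVert d && (vslot d == s))).map
      (fun d => d.toProd.1.2)).Nodup := by
    apply List.Nodup.map_on _ hfil
    intro d hdm d' hdm' hcol
    have hd := List.mem_of_mem_filter hdm
    have hd' := List.mem_of_mem_filter hdm'
    have hPd := List.of_mem_filter hdm
    have hPd' := List.of_mem_filter hdm'
    simp only [Bool.and_eq_true, beq_iff_eq] at hPd hPd'
    exact slot_col_eq hr hp hd hd' hPd.1 hPd'.1 (hPd.2.trans hPd'.2.symm) hcol
  calc (w.darts.filter (fun d => isVert d && (vslot d == s))).length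
      = ((w.darts.filter (fun d => isVert d && (vslot d == s))).map
          (fun d => d.toProd.1.2)).length := (List.length_map _).symm
    _ ≤ Fintype.card (Fin c) := hmap.length_le_card
    _ = c := Fintype.card_fin c

lemma hpred_eq (j : ℕ) (d : (cylGraph r c).Dart) :
    (decide (d.toProd.1.1 = d.toProd.2.1 ∧
      (((d.toProd.1.2 : ℕ) = j ∧ (d.toProd.2.2 : ℕ) = j + 1) ∨
       ((d.toProd.1.2 : ℕ) = j + 1 ∧ (d.toProd.2.2 : ℕ) = j))))
    = (isHoriz d && (hkey d == j)) := by
  rcases dart_cases d with ⟨h1, h2, h3⟩ | ⟨h1, h2, h3⟩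
  · have hv : isHoriz d = false := by simp [isHoriz]; exact h2
    rw [hv, Bool.false_and, decide_eq_false_iff_not]
    rintro ⟨hrow, -⟩; exact h2 hrow
  · have hv : isHoriz d = true := by simp [isHoriz, h1]
    rw [hv, Bool.true_and, Bool.eq_iff_iff]
    simp only [decide_eq_true_iff, beq_iff_eq, hkey]
    constructor
    · rintro ⟨-, h⟩; omega
    · intro h; exact ⟨h1, by omega⟩


lemma sum_mod_two (M : ℕ → ℕ) (a b e : ℕ) (h : ∀ s, a ≤ s → s < b → M s % 2 = e) :
    (∑ s ∈ Finset.Ico a b, M s) % 2 = ((b - a) * e) % 2 := by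
  rw [Finset.sum_nat_mod,
    Finset.sum_congr rfl (fun s hs => by
      rw [h s (Finset.mem_Ico.mp hs).1 (Finset.mem_Ico.mp hs).2]),
    Finset.sum_const, Nat.card_Ico, smul_eq_mul]

lemma card_bound (M : ℕ → ℕ) (r c t a b : ℕ) (hab : b ≤ r)
    (hMc : ∀ s, s < r → M s ≤ c)
    (hsum : (∑ s ∈ Finset.range r, M s) + t = r * c)
    (h : ∀ s, a ≤ s → s < b → M s < c) : b - a ≤ t := by
  have h1 : ∀ s ∈ Finset.range r, (c - M s) + M s = c := fun s hs =>
    Nat.sub_add_cancel (hMc s (Finset.mem_range.mp hs))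
  have h2 : (∑ s ∈ Finset.range r, (c - M s)) + (∑ s ∈ Finset.range r, M s) = r * c := by
    rw [← Finset.sum_add_distrib, Finset.sum_congr rfl h1, Finset.sum_const,
      Finset.card_range, smul_eq_mul]
  have h4 : Finset.Ico a b ⊆ Finset.range r := by
    intro s hs; simp only [Finset.mem_Ico, Finset.mem_range] at *; omega
  have h5 : (Finset.Ico a b).card • 1 ≤ ∑ s ∈ Finset.Ico a b, (c - M s) := by
    apply Finset.card_nsmul_le_sum
    intro s hs
    have := h s (Finset.mem_Ico.mp hs).1 (Finset.mem_Ico.mp hs).2; omega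
  have h6 : ∑ s ∈ Finset.Ico a b, (c - M s) ≤ ∑ s ∈ Finset.range r, (c - M s) :=
    Finset.sum_le_sum_of_subset h4
  have h7 := Nat.card_Ico a b
  simp only [smul_eq_mul, mul_one] at h5
  omega

lemma core1 (r c m X0 SA SB P k : ℕ) (hX0 : 0 < X0) (hX0r : X0 < r)
    (hP : P = 0 ∨ P = 1)
    (hk : (r = 2 * k ∧ r * c = 2 * (k * c)) ∨ (r = 2 * k + 1 ∧ r * c = 2 * (k * c) + c))
    (hSA : SA % 2 = (X0 * ((1 + P) % 2)) % 2)
    (hSB : SB % 2 = ((r - X0) * P) % 2)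
    (hsum : SA + SB + (c + 2 * m) = r * c)
    (hct1 : c % 2 = (1 + P) % 2) : X0 % 2 = (c + r) % 2 := by
  rcases hP with hP | hP <;> subst hP <;> norm_num at hSA hSB hct1 <;>
    rcases hk with ⟨hk, hrc⟩ | ⟨hk, hrc⟩ <;> omega

lemma core2 (r c m X0 SA SB P k : ℕ) (hX0 : 0 < X0) (hX0r : X0 < r)
    (hP : P = 0 ∨ P = 1)
    (hk : (r = 2 * k ∧ r * c = 2 * (k * c)) ∨ (r = 2 * k + 1 ∧ r * c = 2 * (k * c) + c))
    (hSA : SA % 2 = (X0 * ((1 + P) % 2)) % 2)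
    (hSB : SB % 2 = ((r - X0) * P) % 2)
    (hsum : SA + SB + (c + 2 * m) = r * c)
    (hor : P = c % 2 ∨ r % 2 = 0) : X0 % 2 = c % 2 := by
  rcases hP with hP | hP <;> subst hP <;> norm_num at hSA hSB hor <;>
    rcases hk with ⟨hk, hrc⟩ | ⟨hk, hrc⟩ <;> omega

lemma core3 (r c m S e k : ℕ) (he : e = 0 ∨ e = 1)
    (hk : (r = 2 * k ∧ r * c = 2 * (k * c)) ∨ (r = 2 * k + 1 ∧ r * c = 2 * (k * c) + c))
    (hS : S % 2 = (r * e) % 2)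
    (hsum : S + (c + 2 * m) = r * c)
    (hco : c % 2 = 1) : r % 2 = 1 ∧ e ≠ c % 2 := by
  rcases he with he | he <;> subst he <;> norm_num at hS <;>
    rcases hk with ⟨hk, hrc⟩ | ⟨hk, hrc⟩ <;>
    constructor <;> omega

lemma finish (r c m X0 : ℕ) (M : ℕ → ℕ) (hr : 2 ≤ r) (hc : 2 ≤ c) (hX0 : X0 < r)
    (hMc : ∀ s, s < r → M s ≤ c)
    (hsum : (∑ s ∈ Finset.range r, M s) + (c + 2 * m) = r * c)
    (hpar : ∀ p q : ℕ, p < q → q < r →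
      (M p + M q) % 2 = if p < X0 ∧ X0 ≤ q then 1 else 0) :
    ∃ X : ℤ, |X| ≤ (c : ℤ) + 2 * m ∧ (2 : ℤ) ∣ (X - c) ∧ ((X : ZMod r) = (X0 : ZMod r)) := by
  obtain ⟨k, hk⟩ : ∃ k, (r = 2 * k ∧ r * c = 2 * (k * c)) ∨
      (r = 2 * k + 1 ∧ r * c = 2 * (k * c) + c) := by
    rcases Nat.even_or_odd r with ⟨k, hk⟩ | ⟨k, hk⟩
    · exact ⟨k, Or.inl ⟨by omega, by rw [hk]; ring⟩⟩
    · exact ⟨k, Or.inr ⟨by omega, by rw [hk]; ring⟩⟩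
  rcases Nat.lt_or_ge 0 X0 with hx0 | hx0
  · -- X0 ≥ 1
    obtain ⟨P, hPdef⟩ : ∃ P, M X0 % 2 = P := ⟨_, rfl⟩
    have hP01 : P = 0 ∨ P = 1 := by omega
    have hA : ∀ s, s < X0 → M s % 2 = (1 + P) % 2 := by
      intro s hs
      have := hpar s X0 hs hX0
      rw [if_pos ⟨hs, le_refl X0⟩] at this
      omega
    have hB2 : ∀ s, X0 ≤ s → s < r → M s % 2 = P := by
      intro s h1 h2
      rcases Nat.eq_or_lt_of_le h1 with h | h
      · rw [← h]; exact hPdef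
      · have := hpar X0 s h h2
        rw [if_neg (by omega)] at this
        omega
    have hSA := sum_mod_two M 0 X0 ((1 + P) % 2) (fun s _ hs => hA s hs)
    rw [show Finset.Ico 0 X0 = Finset.range X0 by rw [← Finset.range_eq_Ico]] at hSA
    rw [show X0 - 0 = X0 by omega] at hSA
    have hSB := sum_mod_two M X0 r P (fun s h1 h2 => hB2 s h1 h2)
    have hsplit : (∑ s ∈ Finset.range r, M s)
        = (∑ s ∈ Finset.range X0, M s) + (∑ s ∈ Finset.Ico X0 r, M s) := by
      rw [Finset.range_eq_Ico, ← Finset.sum_Ico_consecutive _ (Nat.zero_le X0) hX0.le,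
        ← Finset.range_eq_Ico]
    have hsum2 : (∑ s ∈ Finset.range X0, M s) + (∑ s ∈ Finset.Ico X0 r, M s)
        + (c + 2 * m) = r * c := by omega
    by_cases hAf : ∃ p, p < X0 ∧ M p = c
    · obtain ⟨p0, hp0, hfp⟩ := hAf
      have hct1 : c % 2 = (1 + P) % 2 := by rw [← hA p0 hp0, hfp]
      have hBnf : ∀ s, X0 ≤ s → s < r → M s < c := by
        intro s h1 h2
        rcases Nat.lt_or_ge (M s) c with h | h
        · exact h
        · exfalso
          have hMs : M s = c := le_antisymm (hMc s h2) h
          have := hpar p0 s (by omega) h2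
          rw [if_pos ⟨hp0, h1⟩, hfp, hMs] at this
          omega
      have hbd : r - X0 ≤ c + 2 * m := card_bound M r c (c + 2 * m) X0 r le_rfl hMc hsum hBnf
      have hX0p : X0 % 2 = (c + r) % 2 :=
        core1 r c m X0 _ _ P k hx0 hX0 hP01 hk hSA hSB hsum2 hct1
      refine ⟨(X0 : ℤ) - r, ?_, ?_, ?_⟩
      · rw [abs_sub_comm, abs_of_nonneg (by push_cast; omega)]
        push_cast; omega
      · omega
      · push_cast [ZMod.natCast_self]; ring
    · push_neg at hAf
      have hAnf : ∀ s, s < X0 → M s < c := fun s hs =>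
        Nat.lt_of_le_of_ne (hMc s (by omega)) (hAf s hs)
      have hbdA : X0 ≤ c + 2 * m := by
        have := card_bound M r c (c + 2 * m) 0 X0 hX0.le hMc hsum (fun s _ hs => hAnf s hs)
        omega
      by_cases hxp : X0 % 2 = c % 2
      · refine ⟨(X0 : ℤ), ?_, ?_, ?_⟩
        · rw [abs_of_nonneg (by positivity)]; push_cast; omega
        · omega
        · norm_num
      · have hBnf : ∀ s, X0 ≤ s → s < r → M s < c := by
          intro s h1 h2
          rcases Nat.lt_or_ge (M s) c with h | h
          · exact h
          · exfalso
            have hMs : M s = c := le_antisymm (hMc s h2) h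
            have hPc : P = c % 2 := by rw [← hB2 s h1 h2, hMs]
            exact hxp (core2 r c m X0 _ _ P k hx0 hX0 hP01 hk hSA hSB hsum2 (Or.inl hPc))
        have hbdB : r - X0 ≤ c + 2 * m :=
          card_bound M r c (c + 2 * m) X0 r le_rfl hMc hsum hBnf
        have hrodd : r % 2 = 1 := by
          rcases Nat.even_or_odd r with h | h
          · obtain ⟨t, ht⟩ := h
            have hr0 : r % 2 = 0 := by omega
            exact absurd (core2 r c m X0 _ _ P k hx0 hX0 hP01 hk hSA hSB hsum2
              (Or.inr hr0)) hxp
          · obtain ⟨t, ht⟩ := h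
            omega
        refine ⟨(X0 : ℤ) - r, ?_, ?_, ?_⟩
        · rw [abs_sub_comm, abs_of_nonneg (by push_cast; omega)]
          push_cast; omega
        · clear * - hxp hrodd
          omega
        · push_cast [ZMod.natCast_self]; ring
  · -- X0 = 0
    have hx00 : X0 = 0 := by omega
    subst hx00
    obtain ⟨e, hedef⟩ : ∃ e, M 0 % 2 = e := ⟨_, rfl⟩
    have he01 : e = 0 ∨ e = 1 := by omega
    have hall : ∀ s, s < r → M s % 2 = e := by
      intro s hs
      rcases Nat.eq_or_lt_of_le (Nat.zero_le s) with h | h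
      · rw [← h]; exact hedef
      · have := hpar 0 s h hs
        rw [if_neg (by omega)] at this
        omega
    have hS := sum_mod_two M 0 r e (fun s _ hs => hall s hs)
    rw [show Finset.Ico 0 r = Finset.range r by rw [← Finset.range_eq_Ico]] at hS
    rw [show r - 0 = r by omega] at hS
    rcases Nat.even_or_odd c with hce | hco
    · -- c even
      obtain ⟨t, ht⟩ := hce
      refine ⟨0, by positivity, by clear * - ht; omega, by norm_num⟩
    · -- c odd
      obtain ⟨t2, ht2⟩ := hco
      have hco2 : c % 2 = 1 := by omega
      obtain ⟨hrodd, hnec⟩ := core3 r c m _ e k he01 hk hS hsum hco2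
      have hnof : ∀ s, s < r → M s < c := by
        intro s hs
        rcases Nat.lt_or_ge (M s) c with h | h
        · exact h
        · exact absurd (by rw [← hall s hs, le_antisymm (hMc s hs) h]) hnec
      have hbd : r ≤ c + 2 * m := by
        have := card_bound M r c (c + 2 * m) 0 r le_rfl hMc hsum (fun s _ hs => hnof s hs)
        omega
      refine ⟨(r : ℤ), ?_, ?_, ?_⟩
      · rw [abs_of_nonneg (by positivity)]; push_cast; omega
      · omega
      · push_cast [ZMod.natCast_self]; ring


end Stmt17Aux

open Stmt17Aux

/-- If a Hamiltonian path in the `r × c` cylinder graph (`r, c ≥ 2`) from `(0,0)` to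
`(x, c−1)` uses exactly `2m+1` horizontal edges between the first pair of columns and exactly
one horizontal edge between each subsequent pair of consecutive columns, then
`x ∈ A_{r,c,m} = {(c + 2m − 2i) mod r : 0 ≤ i ≤ c + 2m}`. -/
theorem stmt_17 (r c m : ℕ) (hr : 2 ≤ r) (hc : 2 ≤ c) (x : ZMod r)
    (w : (cylGraph r c).Walk (0, ⟨0, by omega⟩) (x, ⟨c - 1, by omega⟩))
    (hw : w.IsHamiltonian)
    (h0 : hCount w 0 = 2 * m + 1)
    (hj : ∀ j : ℕ, 1 ≤ j → j ≤ c - 2 → hCount w j = 1) :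
    ∃ i : ℕ, i ≤ c + 2 * m ∧ x = (((c : ℤ) + 2 * m - 2 * i : ℤ) : ZMod r) := by
  have hNZ : NeZero r := ⟨by omega⟩
  have hpath : w.IsPath := hw.isPath
  -- total number of darts
  have hlen : w.darts.length = r * c - 1 := by
    rw [SimpleGraph.Walk.length_darts, hw.length_eq]
    congr 1
    rw [Fintype.card_prod, ZMod.card, Fintype.card_fin]
  -- split into vertical and horizontal darts
  have hVH : w.darts.countP (fun d => isVert d) + w.darts.countP (fun d => isHoriz d)
      = r * c - 1 := by
    rw [← hlen, List.length_eq_countP_add_countP (p := fun d => isVert d)]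
    congr 1
    refine List.countP_congr (fun d _ => ?_)
    rw [isHoriz_eq_not_isVert]
    cases isVert d <;> simp
  -- horizontal darts counted by hCount
  have hHc : ∀ j : ℕ, hCount w j
      = w.darts.countP (fun d => isHoriz d && (hkey d == j)) := by
    intro j
    exact List.countP_congr (fun d _ => by rw [hpred_eq j])
  have hHsum : w.darts.countP (fun d => isHoriz d)
      = ∑ j ∈ Finset.range (c - 1), hCount w j := by
    rw [countP_eq_sum_range _ _ hkey (c - 1) (fun d _ hd => hkey_lt hc d hd)]
    exact Finset.sum_congr rfl (fun j _ => (hHc j).symm)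
  have hH : w.darts.countP (fun d => isHoriz d) = c + 2 * m - 1 := by
    rw [hHsum]
    have hsplit : ∑ j ∈ Finset.range (c - 1), hCount w j
        = (∑ j ∈ Finset.Ico 0 1, hCount w j) + ∑ j ∈ Finset.Ico 1 (c - 1), hCount w j := by
      rw [Finset.range_eq_Ico, ← Finset.sum_Ico_consecutive _ (Nat.zero_le 1) (by omega)]
    have h1 : ∑ j ∈ Finset.Ico 0 1, hCount w j = 2 * m + 1 := by
      rw [show Finset.Ico 0 1 = {0} by rfl, Finset.sum_singleton, h0]
    have h2 : ∑ j ∈ Finset.Ico 1 (c - 1), hCount w j = c - 2 := by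
      rw [Finset.sum_congr rfl (fun j hjm => by
        obtain ⟨hj1, hj2⟩ := Finset.mem_Ico.mp hjm
        exact hj j hj1 (by omega)), Finset.sum_const, Nat.card_Ico, smul_eq_mul, mul_one]
      omega
    rw [hsplit, h1, h2]
    omega
  -- vertical darts counted by slot
  have hVsum : w.darts.countP (fun d => isVert d)
      = ∑ s ∈ Finset.range r, w.darts.countP (fun d => isVert d && (vslot d == s)) :=
    countP_eq_sum_range _ _ vslot r (fun d _ _ => vslot_lt d)
  have hrc4 : 2 * 2 ≤ r * c := Nat.mul_le_mul hr hc
  have hsum : (∑ s ∈ Finset.range r, w.darts.countP (fun d => isVert d && (vslot d == s)))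
      + (c + 2 * m) = r * c := by
    rw [← hVsum]; omega
  have hMc : ∀ s, s < r → w.darts.countP (fun d => isVert d && (vslot d == s)) ≤ c :=
    fun s _ => slot_count_le hr hpath s
  -- parity relation
  have hpar : ∀ p q : ℕ, p < q → q < r →
      (w.darts.countP (fun d => isVert d && (vslot d == p))
        + w.darts.countP (fun d => isVert d && (vslot d == q))) % 2
      = if p < x.val ∧ x.val ≤ q then 1 else 0 := by
    intro p q hpq hqr
    have hflip := walk_flip_parity (sideB p q) w
    have hfun : (fun d : (cylGraph r c).Dart => sideB p q d.toProd.1 != sideB p q d.toProd.2)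
        = fun d => (isVert d && (vslot d == p)) || (isVert d && (vslot d == q)) := by
      funext d
      rw [side_dart hr hpq hqr d]
      cases isVert d <;> simp
    rw [hfun, countP_or_disjoint _ _ _ (fun d hd => by
      simp only [Bool.and_eq_true, beq_iff_eq] at hd
      omega)] at hflip
    rw [hflip]
    have hstart : sideB (r := r) (c := c) p q (0, ⟨0, by omega⟩) = false := by
      simp [sideB, ZMod.val_zero]
    rw [hstart]
    by_cases hcond : p < x.val ∧ x.val ≤ q
    · rw [if_pos hcond]
      have : sideB (r := r) (c := c) p q (x, ⟨c - 1, by omega⟩) = true := by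
        simp only [sideB, decide_eq_true_iff]; exact hcond
      rw [this]; simp
    · rw [if_neg hcond]
      have : sideB (r := r) (c := c) p q (x, ⟨c - 1, by omega⟩) = false := by
        simp only [sideB, decide_eq_false_iff_not]; exact hcond
      rw [this]; simp
  -- apply the arithmetic finish
  obtain ⟨X, hX1, hX2, hX3⟩ := finish r c m x.val
    (fun s => w.darts.countP (fun d => isVert d && (vslot d == s)))
    hr hc (ZMod.val_lt x) hMc hsum hpar
  obtain ⟨i0, hi0⟩ : ∃ i0 : ℤ, (c : ℤ) + 2 * m - X = 2 * i0 := by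
    obtain ⟨t, ht⟩ := hX2
    exact ⟨(c : ℤ) + m - t - c, by omega⟩
  have habs := abs_le.mp hX1
  refine ⟨i0.toNat, by omega, ?_⟩
  have hxval : ((x.val : ℕ) : ZMod r) = x := ZMod.natCast_rightInverse x
  have hXeq : ((c : ℤ) + 2 * m - 2 * (i0.toNat : ℤ)) = X := by omega
  rw [← hxval, ← hX3, ← hXeq]
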